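/- Two-state HLL estimate (Corollary 2.4): Let d ∈ {1,2,3}, let U, Ũ ∈ 𝒢 with magnetic fields B, B̃, and let ξ ∈ ℝ^d be a unit vector. For every α ≥ α_r(U, Ũ; ξ) and every α̃ ≤ α_l(Ũ, U; ξ) one has α > α̃, and the state Ū = (α − α̃)⁻¹ (αU − ⟨ξ, F(U)⟩ − α̃Ũ + ⟨ξ, F(Ũ)⟩) has positive density component and satisfies, for all v*, B* ∈ ℝ³, Ū·n* + |B*|²/2 + (v*·B*)(α − α̃)⁻¹(⟨ξ, B⟩ − ⟨ξ, B̃⟩) ≥ 0. Furthermore, if ⟨ξ, B⟩ = ⟨ξ, B̃⟩ then Ū ∈ cl(𝒢*). -/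

import Mathlib

noncomputable section

open Finset

/-- An MHD state `U = (ρ, m, B, E)` viewed as a vector in `ℝ⁸`. -/
abbrev MHDState := Fin 8 → ℝ

namespace MHD

/-- Build a state from density, momentum, magnetic field, total energy. -/
def mk (ρ : ℝ) (m B : Fin 3 → ℝ) (E : ℝ) : MHDState :=
  ![ρ, m 0, m 1, m 2, B 0, B 1, B 2, E]

/-- Density component. -/
def dens (U : MHDState) : ℝ := U 0

/-- Momentum components. -/
def mom (U : MHDState) : Fin 3 → ℝ := ![U 1, U 2, U 3]

/-- Magnetic field components. -/
def magB (U : MHDState) : Fin 3 → ℝ := ![U 4, U 5, U 6]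

/-- Total energy component. -/
def toten (U : MHDState) : ℝ := U 7

/-- Euclidean dot product on `ℝ³`. -/
def dot3 (a b : Fin 3 → ℝ) : ℝ := ∑ k, a k * b k

/-- Squared Euclidean norm on `ℝ³`. -/
def sq3 (a : Fin 3 → ℝ) : ℝ := dot3 a a

/-- Euclidean norm on `ℝ³`. -/
def norm3 (a : Fin 3 → ℝ) : ℝ := Real.sqrt (sq3 a)

/-- Velocity `v = m / ρ`. -/
def vel (U : MHDState) : Fin 3 → ℝ := fun k => mom U k / dens U

/-- Internal energy `𝓔(U) = E − (|m|²/ρ + |B|²)/2`. -/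
def intE (U : MHDState) : ℝ := toten U - (sq3 (mom U) / dens U + sq3 (magB U)) / 2

/-- Specific internal energy `e = 𝓔(U)/ρ`. -/
def specE (U : MHDState) : ℝ := intE U / dens U

/-- The admissible state set `𝒢`. -/
def Gset : Set MHDState := {U | 0 < dens U ∧ 0 < intE U}

/-- The set `𝒢_ρ` of states with positive density. -/
def Grho : Set MHDState := {U | 0 < dens U}

/-- Euclidean dot product on `ℝ⁸`. -/
def dot8 (U V : MHDState) : ℝ := ∑ i, U i * V i

/-- The vector `n* = (|v*|²/2, −v*, −B*, 1)`. -/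
def nstar (vs Bs : Fin 3 → ℝ) : MHDState :=
  mk (sq3 vs / 2) (fun k => -vs k) (fun k => -Bs k) 1

/-- The set `𝒢*`. -/
def GstarSet : Set MHDState :=
  {U | 0 < dens U ∧ ∀ vs Bs : Fin 3 → ℝ, 0 < dot8 U (nstar vs Bs) + sq3 Bs / 2}

/-- Equation of state assumption: for `ρ > 0`, `e > 0 ↔ p(ρ,e) > 0`. -/
def IsEOS (pfun : ℝ → ℝ → ℝ) : Prop :=
  ∀ ρ e : ℝ, 0 < ρ → (0 < e ↔ 0 < pfun ρ e)

/-- Pressure of a state, via the equation of state. -/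
def pres (pfun : ℝ → ℝ → ℝ) (U : MHDState) : ℝ := pfun (dens U) (specE U)

/-- Total pressure `p + |B|²/2`. -/
def ptot (pfun : ℝ → ℝ → ℝ) (U : MHDState) : ℝ := pres pfun U + sq3 (magB U) / 2

/-- The `i`-th flux `F_i(U)`. -/
def flux (pfun : ℝ → ℝ → ℝ) (i : Fin 3) (U : MHDState) : MHDState :=
  mk (dens U * vel U i)
    (fun k => dens U * vel U i * vel U k - magB U i * magB U k
      + ptot pfun U * (if k = i then 1 else 0))
    (fun k => vel U i * magB U k - magB U i * vel U k)
    (vel U i * (toten U + ptot pfun U) - magB U i * dot3 (vel U) (magB U))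

/-- Directional inner product `⟨ξ, w⟩ = Σ_{k<d} ξ_k w_k` for `ξ ∈ ℝ^d`, `w ∈ ℝ³`, `d ≤ 3`. -/
def dirDot {d : ℕ} (hd : d ≤ 3) (ξ : Fin d → ℝ) (w : Fin 3 → ℝ) : ℝ :=
  ∑ k, ξ k * w (Fin.castLE hd k)

/-- Directional flux `⟨ξ, F(U)⟩ = Σ_{i<d} ξ_i F_i(U)`. -/
def dirFlux (pfun : ℝ → ℝ → ℝ) {d : ℕ} (hd : d ≤ 3) (ξ : Fin d → ℝ) (U : MHDState) :
    MHDState :=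
  ∑ i, ξ i • flux pfun (Fin.castLE hd i) U

/-- `ξ` is a unit vector. -/
def unitVec {d : ℕ} (ξ : Fin d → ℝ) : Prop := (∑ k, (ξ k) ^ 2) = 1

/-- `𝒞_s(U) = p / (ρ √(2e))`. -/
def soundC (pfun : ℝ → ℝ → ℝ) (U : MHDState) : ℝ :=
  pres pfun U / (dens U * Real.sqrt (2 * specE U))

/-- `𝒞(U; ξ)`. -/
def waveC (pfun : ℝ → ℝ → ℝ) {d : ℕ} (hd : d ≤ 3) (ξ : Fin d → ℝ) (U : MHDState) : ℝ :=
  Real.sqrt ((soundC pfun U ^ 2 + sq3 (magB U) / dens U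
    + Real.sqrt ((soundC pfun U ^ 2 + sq3 (magB U) / dens U) ^ 2
      - 4 * soundC pfun U ^ 2 * dirDot hd ξ (magB U) ^ 2 / dens U)) / 2)

/-- Roe-type averaged velocity `v̄ = (√ρ v + √ρ̃ ṽ)/(√ρ + √ρ̃)`. -/
def roeV (U Ut : MHDState) : Fin 3 → ℝ := fun k =>
  (Real.sqrt (dens U) * vel U k + Real.sqrt (dens Ut) * vel Ut k)
    / (Real.sqrt (dens U) + Real.sqrt (dens Ut))

/-- `α_r(U, Ũ; ξ)`. -/
def alphaR (pfun : ℝ → ℝ → ℝ) {d : ℕ} (hd : d ≤ 3) (ξ : Fin d → ℝ) (U Ut : MHDState) : ℝ :=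
  max (dirDot hd ξ (vel U)) (dirDot hd ξ (roeV U Ut)) + waveC pfun hd ξ U
    + norm3 (magB U - magB Ut) / (Real.sqrt (dens U) + Real.sqrt (dens Ut))

/-- `α_l(U, Ũ; ξ)`. -/
def alphaL (pfun : ℝ → ℝ → ℝ) {d : ℕ} (hd : d ≤ 3) (ξ : Fin d → ℝ) (U Ut : MHDState) : ℝ :=
  min (dirDot hd ξ (vel U)) (dirDot hd ξ (roeV U Ut)) - waveC pfun hd ξ U
    - norm3 (magB U - magB Ut) / (Real.sqrt (dens U) + Real.sqrt (dens Ut))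

/-- `α_⋆(U, Ũ; ξ)`. -/
def alphaS (pfun : ℝ → ℝ → ℝ) {d : ℕ} (hd : d ≤ 3) (ξ : Fin d → ℝ) (U Ut : MHDState) : ℝ :=
  max (|dirDot hd ξ (vel U)|) (|dirDot hd ξ (roeV U Ut)|) + waveC pfun hd ξ U
    + norm3 (magB U - magB Ut) / (Real.sqrt (dens U) + Real.sqrt (dens Ut))

/-- The vector `θ(U, v*, B*) = 2^{−1/2}(B − B*, √ρ(v − v*), √(2ρe)) ∈ ℝ⁷`. -/
def theta (U : MHDState) (vs Bs : Fin 3 → ℝ) : Fin 7 → ℝ :=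
  ![(magB U 0 - Bs 0) / Real.sqrt 2,
    (magB U 1 - Bs 1) / Real.sqrt 2,
    (magB U 2 - Bs 2) / Real.sqrt 2,
    Real.sqrt (dens U) * (vel U 0 - vs 0) / Real.sqrt 2,
    Real.sqrt (dens U) * (vel U 1 - vs 1) / Real.sqrt 2,
    Real.sqrt (dens U) * (vel U 2 - vs 2) / Real.sqrt 2,
    Real.sqrt (2 * intE U) / Real.sqrt 2]

/-- `|θ|²`. -/
def thetaSq (U : MHDState) (vs Bs : Fin 3 → ℝ) : ℝ := ∑ k, theta U vs Bs k ^ 2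

/-- Godunov–Powell source vector `S(U) = (0, B, v, v·B)`. -/
def source (U : MHDState) : MHDState := mk 0 (magB U) (vel U) (dot3 (vel U) (magB U))

/-- HLL numerical flux with clamped wave speeds `σm ≤ 0 ≤ σp`. -/
def hllFlux (pfun : ℝ → ℝ → ℝ) {d : ℕ} (hd : d ≤ 3) (ξ : Fin d → ℝ)
    (Um Up : MHDState) (σm σp : ℝ) : MHDState :=
  (σp - σm)⁻¹ • (σp • dirFlux pfun hd ξ Um - σm • dirFlux pfun hd ξ Up
    + (σm * σp) • (Up - Um))

/-- HLL intermediate state `H(U⁻, U⁺; ξ)`. -/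
def hllMid (pfun : ℝ → ℝ → ℝ) {d : ℕ} (hd : d ≤ 3) (ξ : Fin d → ℝ)
    (Um Up : MHDState) (σm σp : ℝ) : MHDState :=
  (σp - σm)⁻¹ • (σp • Up - dirFlux pfun hd ξ Up - σm • Um + dirFlux pfun hd ξ Um)

/-- The quantity `α̂_j` of Theorem 2.3. -/
def alphaHat (pfun : ℝ → ℝ → ℝ) {d : ℕ} (hd : d ≤ 3) {N : ℕ}
    (s : Fin N → ℝ) (ξ : Fin N → Fin d → ℝ) (U : Fin N → MHDState) (j : Fin N) : ℝ :=
  max (dirDot hd (ξ j) (vel (U j)))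
      ((∑ i, s i)⁻¹ * ∑ i, s i * dirDot hd (fun k => ξ j k - ξ i k) (roeV (U j) (U i)))
  + waveC pfun hd (ξ j) (U j)
  + 2 * (∑ i, s i)⁻¹ * ∑ i, s i *
      (norm3 (magB (U j) - magB (U i)) / (Real.sqrt (dens (U j)) + Real.sqrt (dens (U i))))

def d1le3 : (1 : ℕ) ≤ 3 := by omega
def d2le3 : (2 : ℕ) ≤ 3 := by omega

/-- In one dimension the direction `ξ = 1`. -/
def xi1 : Fin 1 → ℝ := fun _ => 1

/-! ### Basic toolbox -/

lemma dot3_expand (a b : Fin 3 → ℝ) : dot3 a b = a 0 * b 0 + a 1 * b 1 + a 2 * b 2 := by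
  simp [dot3, Fin.sum_univ_three]

lemma sq3_expand (a : Fin 3 → ℝ) : sq3 a = a 0 * a 0 + a 1 * a 1 + a 2 * a 2 := by
  simp [sq3, dot3_expand]

lemma sq3_nonneg (a : Fin 3 → ℝ) : 0 ≤ sq3 a := by
  rw [sq3_expand]
  nlinarith [mul_self_nonneg (a 0), mul_self_nonneg (a 1), mul_self_nonneg (a 2)]

lemma norm3_nonneg (a : Fin 3 → ℝ) : 0 ≤ norm3 a := Real.sqrt_nonneg _

lemma norm3_sq (a : Fin 3 → ℝ) : norm3 a ^ 2 = sq3 a := Real.sq_sqrt (sq3_nonneg a)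

lemma abs_dot3_le (a b : Fin 3 → ℝ) : |dot3 a b| ≤ norm3 a * norm3 b := by
  have h : (dot3 a b) ^ 2 ≤ sq3 a * sq3 b := by
    rw [dot3_expand, sq3_expand, sq3_expand]
    nlinarith [sq_nonneg (a 0 * b 1 - a 1 * b 0), sq_nonneg (a 0 * b 2 - a 2 * b 0),
      sq_nonneg (a 1 * b 2 - a 2 * b 1)]
  have := Real.sqrt_le_sqrt h
  rwa [Real.sqrt_sq_eq_abs, Real.sqrt_mul (sq3_nonneg a)] at this

lemma dot3_le (a b : Fin 3 → ℝ) : dot3 a b ≤ norm3 a * norm3 b :=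
  le_trans (le_abs_self _) (abs_dot3_le a b)

lemma norm3_comb (a b : Fin 3 → ℝ) {c e : ℝ} (hc : 0 ≤ c) (he : 0 ≤ e) :
    norm3 (fun k => c * a k + e * b k) ≤ c * norm3 a + e * norm3 b := by
  have h1 : sq3 (fun k => c * a k + e * b k) ≤ (c * norm3 a + e * norm3 b) ^ 2 := by
    have hd := dot3_le a b
    have h2 : sq3 (fun k => c * a k + e * b k)
        = c ^ 2 * sq3 a + 2 * c * e * dot3 a b + e ^ 2 * sq3 b := by
      simp only [sq3_expand, dot3_expand]; ring
    have h3 : (c * norm3 a + e * norm3 b) ^ 2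
        = c ^ 2 * sq3 a + 2 * c * e * (norm3 a * norm3 b) + e ^ 2 * sq3 b := by
      rw [← norm3_sq a, ← norm3_sq b]; ring
    nlinarith [mul_nonneg hc he]
  calc norm3 (fun k => c * a k + e * b k) = Real.sqrt (sq3 _) := rfl
    _ ≤ Real.sqrt ((c * norm3 a + e * norm3 b) ^ 2) := Real.sqrt_le_sqrt h1
    _ = |c * norm3 a + e * norm3 b| := Real.sqrt_sq_eq_abs _
    _ = c * norm3 a + e * norm3 b := abs_of_nonneg (add_nonneg (mul_nonneg hc (norm3_nonneg a)) (mul_nonneg he (norm3_nonneg b)))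

lemma norm3_sub_symm (a b : Fin 3 → ℝ) : norm3 (a - b) = norm3 (b - a) := by
  unfold norm3; congr 1; simp [sq3_expand, Pi.sub_apply]; ring

/-! ### Dimension bridging -/

def pad {d : ℕ} (hd : d ≤ 3) (ξ : Fin d → ℝ) : Fin 3 → ℝ :=
  fun k => if h : (k : ℕ) < d then ξ ⟨k, h⟩ else 0

lemma dirDot_eq_dot3 {d : ℕ} (hd : d ≤ 3) (ξ : Fin d → ℝ) (w : Fin 3 → ℝ) :
    dirDot hd ξ w = dot3 (pad hd ξ) w := by
  interval_cases d <;>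
    simp [dirDot, dot3_expand, pad, Fin.sum_univ_succ, Fin.castLE] <;> ring

lemma pad_unit {d : ℕ} (hd : d ≤ 3) {ξ : Fin d → ℝ} (hξ : unitVec ξ) :
    sq3 (pad hd ξ) = 1 := by
  unfold unitVec at hξ
  interval_cases d
  · simp at hξ
  · simp only [Fin.sum_univ_one] at hξ
    simp only [sq3_expand, pad]
    norm_num
    nlinarith [hξ]
  · simp only [Fin.sum_univ_two] at hξ
    simp only [sq3_expand, pad]
    norm_num
    nlinarith [hξ]
  · simp only [Fin.sum_univ_three] at hξ
    have hp : pad hd ξ = ξ := by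
      funext k
      simp only [pad, k.isLt, dif_pos, Fin.eta]
    rw [hp, sq3_expand]
    nlinarith [hξ]

/-! ### dot8 and the potential φ -/

lemma dot8_expand (U V : MHDState) : dot8 U V
    = U 0 * V 0 + U 1 * V 1 + U 2 * V 2 + U 3 * V 3
      + U 4 * V 4 + U 5 * V 5 + U 6 * V 6 + U 7 * V 7 := by
  simp [dot8, Fin.sum_univ_eight]

lemma mk0 (ρ : ℝ) (m B : Fin 3 → ℝ) (E : ℝ) : mk ρ m B E 0 = ρ := rfl
lemma mk1 (ρ : ℝ) (m B : Fin 3 → ℝ) (E : ℝ) : mk ρ m B E 1 = m 0 := rfl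
lemma mk2 (ρ : ℝ) (m B : Fin 3 → ℝ) (E : ℝ) : mk ρ m B E 2 = m 1 := rfl
lemma mk3 (ρ : ℝ) (m B : Fin 3 → ℝ) (E : ℝ) : mk ρ m B E 3 = m 2 := rfl
lemma mk4 (ρ : ℝ) (m B : Fin 3 → ℝ) (E : ℝ) : mk ρ m B E 4 = B 0 := rfl
lemma mk5 (ρ : ℝ) (m B : Fin 3 → ℝ) (E : ℝ) : mk ρ m B E 5 = B 1 := rfl
lemma mk6 (ρ : ℝ) (m B : Fin 3 → ℝ) (E : ℝ) : mk ρ m B E 6 = B 2 := rfl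
lemma mk7 (ρ : ℝ) (m B : Fin 3 → ℝ) (E : ℝ) : mk ρ m B E 7 = E := rfl

lemma mom0 (U : MHDState) : mom U 0 = U 1 := rfl
lemma mom1 (U : MHDState) : mom U 1 = U 2 := rfl
lemma mom2 (U : MHDState) : mom U 2 = U 3 := rfl
lemma magB0 (U : MHDState) : magB U 0 = U 4 := rfl
lemma magB1 (U : MHDState) : magB U 1 = U 5 := rfl
lemma magB2 (U : MHDState) : magB U 2 = U 6 := rfl

lemma phi_eq (U : MHDState) (h : dens U ≠ 0) (vs Bs : Fin 3 → ℝ) :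
    dot8 U (nstar vs Bs) + sq3 Bs / 2
      = dens U * sq3 (fun k => vel U k - vs k) / 2
        + sq3 (fun k => magB U k - Bs k) / 2 + intE U := by
  rw [dot8_expand]
  simp only [intE, vel, nstar, mk0, mk1, mk2, mk3, mk4, mk5, mk6, mk7,
    sq3_expand, dot3_expand, mom0, mom1, mom2, magB0, magB1, magB2, toten]
  unfold dens at h ⊢
  field_simp
  ring

/-! ### Flux identities -/

lemma fmk0 (h : (0:ℕ) < 3) : (⟨0, h⟩ : Fin 3) = 0 := rfl
lemma fmk1 (h : (1:ℕ) < 3) : (⟨1, h⟩ : Fin 3) = 1 := rfl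
lemma fmk2 (h : (2:ℕ) < 3) : (⟨2, h⟩ : Fin 3) = 2 := rfl

lemma dot8_dirFlux (pfun : ℝ → ℝ → ℝ) {d : ℕ} (hd : d ≤ 3) (ξ : Fin d → ℝ)
    (U n : MHDState) :
    dot8 (dirFlux pfun hd ξ U) n = ∑ i, ξ i * dot8 (flux pfun (Fin.castLE hd i) U) n := by
  unfold dot8 dirFlux
  simp only [Finset.sum_apply, Pi.smul_apply, smul_eq_mul, Finset.sum_mul, Finset.mul_sum]
  rw [Finset.sum_comm]
  exact Finset.sum_congr rfl fun i _ => Finset.sum_congr rfl fun j _ => by ring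

set_option maxHeartbeats 1000000 in
lemma flux_dot (pfun : ℝ → ℝ → ℝ) (U : MHDState) (h : dens U ≠ 0)
    (i : Fin 3) (vs Bs : Fin 3 → ℝ) :
    dot8 (flux pfun i U) (nstar vs Bs)
      = vel U i * (dot8 U (nstar vs Bs) + sq3 Bs / 2 + pres pfun U
          + (sq3 (magB U) - sq3 Bs) / 2)
        + magB U i * (dot3 (magB U) vs + dot3 (vel U) Bs - dot3 (vel U) (magB U))
        - ptot pfun U * vs i := by
  have hE : toten U = U 7 := rfl
  fin_cases i <;>
  · simp only [fmk0, fmk1, fmk2]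
    rw [dot8_expand, dot8_expand]
    simp only [flux, ptot, nstar, mk0, mk1, mk2, mk3, mk4, mk5, mk6, mk7,
      sq3_expand, dot3_expand, vel, mom0, mom1, mom2, magB0, magB1, magB2, hE]
    simp only [Fin.reduceEq, reduceIte, if_true]
    unfold dens at h ⊢
    field_simp
    ring

lemma dirFlux_dot (pfun : ℝ → ℝ → ℝ) {d : ℕ} (hd : d ≤ 3) (ξ : Fin d → ℝ)
    (U : MHDState) (h : dens U ≠ 0) (vs Bs : Fin 3 → ℝ) :
    dot8 (dirFlux pfun hd ξ U) (nstar vs Bs)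
      = dirDot hd ξ (vel U) * (dot8 U (nstar vs Bs) + sq3 Bs / 2 + pres pfun U
          + (sq3 (magB U) - sq3 Bs) / 2)
        + dirDot hd ξ (magB U)
            * (dot3 (magB U) vs + dot3 (vel U) Bs - dot3 (vel U) (magB U))
        - ptot pfun U * dirDot hd ξ vs := by
  rw [dot8_dirFlux]
  have step : ∀ i ∈ (Finset.univ : Finset (Fin d)),
      ξ i * dot8 (flux pfun (Fin.castLE hd i) U) (nstar vs Bs)
        = ξ i * vel U (Fin.castLE hd i) * (dot8 U (nstar vs Bs) + sq3 Bs / 2 + pres pfun U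
            + (sq3 (magB U) - sq3 Bs) / 2)
          + ξ i * magB U (Fin.castLE hd i)
              * (dot3 (magB U) vs + dot3 (vel U) Bs - dot3 (vel U) (magB U))
          - ξ i * vs (Fin.castLE hd i) * ptot pfun U := by
    intro i _
    rw [flux_dot pfun U h]
    ring
  rw [Finset.sum_congr rfl step]
  rw [Finset.sum_sub_distrib, Finset.sum_add_distrib, ← Finset.sum_mul, ← Finset.sum_mul,
    ← Finset.sum_mul]
  rw [dirDot, dirDot, dirDot]
  ring

lemma master (pfun : ℝ → ℝ → ℝ) {d : ℕ} (hd : d ≤ 3) (ξ : Fin d → ℝ)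
    (U : MHDState) (h : dens U ≠ 0) (vs Bs : Fin 3 → ℝ) :
    dot8 (dirFlux pfun hd ξ U) (nstar vs Bs) - dot3 vs Bs * dirDot hd ξ (magB U)
      = dirDot hd ξ (vel U) * (dot8 U (nstar vs Bs) + sq3 Bs / 2)
        + (pres pfun U + dot3 (fun k => magB U k - Bs k) (magB U)
            - sq3 (fun k => magB U k - Bs k) / 2)
          * (dirDot hd ξ (vel U) - dirDot hd ξ vs)
        - dot3 (fun k => vel U k - vs k) (fun k => magB U k - Bs k) * dirDot hd ξ (magB U)
        - sq3 Bs / 2 * dirDot hd ξ vs := by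
  rw [dirFlux_dot pfun hd ξ U h vs Bs]
  rw [dirDot_eq_dot3, dirDot_eq_dot3, dirDot_eq_dot3]
  simp only [ptot, sq3_expand, dot3_expand]
  ring

/-! ### Wave speed facts -/

lemma specE_pos {U : MHDState} (hU : U ∈ Gset) : 0 < specE U :=
  div_pos hU.2 hU.1

lemma intE_eq {U : MHDState} (hU : U ∈ Gset) : intE U = dens U * specE U := by
  unfold specE
  rw [mul_comm]
  exact (div_mul_cancel₀ _ hU.1.ne').symm

lemma pres_pos {pfun : ℝ → ℝ → ℝ} (hEOS : IsEOS pfun) {U : MHDState} (hU : U ∈ Gset) :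
    0 < pres pfun U :=
  (hEOS (dens U) (specE U) hU.1).mp (specE_pos hU)

lemma soundC_pos {pfun : ℝ → ℝ → ℝ} (hEOS : IsEOS pfun) {U : MHDState} (hU : U ∈ Gset) :
    0 < soundC pfun U := by
  apply div_pos (pres_pos hEOS hU)
  exact mul_pos hU.1 (Real.sqrt_pos.mpr (by linarith [specE_pos hU]))

lemma pres_eq (pfun : ℝ → ℝ → ℝ) {U : MHDState} (hU : U ∈ Gset) :
    pres pfun U = soundC pfun U * (dens U * Real.sqrt (2 * specE U)) := by
  unfold soundC
  have h0 : (0:ℝ) < Real.sqrt (2 * specE U) :=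
    Real.sqrt_pos.mpr (by linarith [specE_pos hU])
  have h : dens U * Real.sqrt (2 * specE U) ≠ 0 := (mul_pos hU.1 h0).ne'
  exact (div_mul_cancel₀ _ h).symm

section WaveFacts

variable {pfun : ℝ → ℝ → ℝ} {d : ℕ} (hd : d ≤ 3) (ξ : Fin d → ℝ) {U : MHDState}

lemma Bxi_sq_le (hξ : unitVec ξ) (w : Fin 3 → ℝ) : (dirDot hd ξ w) ^ 2 ≤ sq3 w := by
  rw [dirDot_eq_dot3]
  have h := abs_dot3_le (pad hd ξ) w
  have h2 : norm3 (pad hd ξ) = 1 := by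
    unfold norm3; rw [pad_unit hd hξ]; exact Real.sqrt_one
  rw [h2, one_mul] at h
  calc (dot3 (pad hd ξ) w) ^ 2 = |dot3 (pad hd ξ) w| ^ 2 := (sq_abs _).symm
    _ ≤ (norm3 w) ^ 2 := by nlinarith [abs_nonneg (dot3 (pad hd ξ) w), norm3_nonneg w]
    _ = sq3 w := norm3_sq w

lemma inner_disc_nonneg (hξ : unitVec ξ) (hρ : 0 < dens U) :
    0 ≤ (soundC pfun U ^ 2 + sq3 (magB U) / dens U) ^ 2
      - 4 * soundC pfun U ^ 2 * dirDot hd ξ (magB U) ^ 2 / dens U := by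
  have hB := Bxi_sq_le hd ξ hξ (magB U)
  have h1 : dirDot hd ξ (magB U) ^ 2 / dens U ≤ sq3 (magB U) / dens U :=
    div_le_div_of_nonneg_right hB (le_of_lt hρ)
  have h2 : (0:ℝ) ≤ dirDot hd ξ (magB U) ^ 2 / dens U := by positivity
  have h3 : 4 * soundC pfun U ^ 2 * dirDot hd ξ (magB U) ^ 2 / dens U
      = 4 * soundC pfun U ^ 2 * (dirDot hd ξ (magB U) ^ 2 / dens U) := by ring
  rw [h3]
  nlinarith [sq_nonneg (soundC pfun U ^ 2 - sq3 (magB U) / dens U), sq_nonneg (soundC pfun U)]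

lemma waveC_sq (hξ : unitVec ξ) (hρ : 0 < dens U) :
    (waveC pfun hd ξ U) ^ 2
      = (soundC pfun U ^ 2 + sq3 (magB U) / dens U
          + Real.sqrt ((soundC pfun U ^ 2 + sq3 (magB U) / dens U) ^ 2
            - 4 * soundC pfun U ^ 2 * dirDot hd ξ (magB U) ^ 2 / dens U)) / 2 := by
  unfold waveC
  apply Real.sq_sqrt
  have h1 : (0:ℝ) ≤ sq3 (magB U) / dens U := div_nonneg (sq3_nonneg _) (le_of_lt hρ)
  have h2 := Real.sqrt_nonneg ((soundC pfun U ^ 2 + sq3 (magB U) / dens U) ^ 2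
            - 4 * soundC pfun U ^ 2 * dirDot hd ξ (magB U) ^ 2 / dens U)
  positivity

lemma waveC_rel (hξ : unitVec ξ) (hρ : 0 < dens U) :
    (waveC pfun hd ξ U) ^ 4
      = (soundC pfun U ^ 2 + sq3 (magB U) / dens U) * (waveC pfun hd ξ U) ^ 2
        - soundC pfun U ^ 2 * dirDot hd ξ (magB U) ^ 2 / dens U := by
  have hS := Real.sq_sqrt (inner_disc_nonneg hd ξ hξ hρ (pfun := pfun))
  have h2 := waveC_sq hd ξ hξ hρ (pfun := pfun)
  have h4 : (waveC pfun hd ξ U) ^ 4 = ((waveC pfun hd ξ U) ^ 2) ^ 2 := by ring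
  rw [h4, h2]
  linear_combination hS / 4

lemma soundC_sq_le (hξ : unitVec ξ) (hρ : 0 < dens U) :
    soundC pfun U ^ 2 ≤ (waveC pfun hd ξ U) ^ 2 := by
  rw [waveC_sq hd ξ hξ hρ]
  set a2 := soundC pfun U ^ 2 with ha2
  set b2 := sq3 (magB U) / dens U with hb2
  set x2 := dirDot hd ξ (magB U) ^ 2 / dens U with hx2
  have hb2n : 0 ≤ b2 := div_nonneg (sq3_nonneg _) (le_of_lt hρ)
  have hx2n : 0 ≤ x2 := by positivity
  have hxb : x2 ≤ b2 := div_le_div_of_nonneg_right (Bxi_sq_le hd ξ hξ (magB U)) (le_of_lt hρ)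
  have ha2n : (0:ℝ) ≤ a2 := sq_nonneg _
  rcases le_or_gt a2 b2 with h | h
  · have := Real.sqrt_nonneg ((a2 + b2) ^ 2 - 4 * soundC pfun U ^ 2 * dirDot hd ξ (magB U) ^ 2 / dens U)
    linarith
  · have harg : (a2 - b2) ^ 2 ≤ (a2 + b2) ^ 2 - 4 * soundC pfun U ^ 2 * dirDot hd ξ (magB U) ^ 2 / dens U := by
      have h3 : 4 * soundC pfun U ^ 2 * dirDot hd ξ (magB U) ^ 2 / dens U = 4 * a2 * x2 := by
        rw [ha2, hx2]; ring
      rw [h3]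
      nlinarith
    have := Real.le_sqrt_of_sq_le harg
    linarith

lemma xsq_le_waveC_sq (hξ : unitVec ξ) (hρ : 0 < dens U) :
    dirDot hd ξ (magB U) ^ 2 / dens U ≤ (waveC pfun hd ξ U) ^ 2 := by
  rw [waveC_sq hd ξ hξ hρ]
  set a2 := soundC pfun U ^ 2 with ha2
  set b2 := sq3 (magB U) / dens U with hb2
  set x2 := dirDot hd ξ (magB U) ^ 2 / dens U with hx2
  have hb2n : 0 ≤ b2 := div_nonneg (sq3_nonneg _) (le_of_lt hρ)
  have hx2n : 0 ≤ x2 := by positivity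
  have hxb : x2 ≤ b2 := div_le_div_of_nonneg_right (Bxi_sq_le hd ξ hξ (magB U)) (le_of_lt hρ)
  have ha2n : (0:ℝ) ≤ a2 := sq_nonneg _
  have h3 : 4 * soundC pfun U ^ 2 * dirDot hd ξ (magB U) ^ 2 / dens U = 4 * a2 * x2 := by
    rw [ha2, hx2]; ring
  rcases le_or_gt (2 * x2 - a2 - b2) 0 with h | h
  · have := Real.sqrt_nonneg ((a2 + b2) ^ 2 - 4 * soundC pfun U ^ 2 * dirDot hd ξ (magB U) ^ 2 / dens U)
    linarith
  · have harg : (2 * x2 - a2 - b2) ^ 2 ≤ (a2 + b2) ^ 2 - 4 * soundC pfun U ^ 2 * dirDot hd ξ (magB U) ^ 2 / dens U := by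
      rw [h3]
      nlinarith
    have := Real.le_sqrt_of_sq_le harg
    linarith

lemma waveC_nonneg : 0 ≤ waveC pfun hd ξ U := Real.sqrt_nonneg _

lemma soundC_le_waveC (hξ : unitVec ξ) (hρ : 0 < dens U) (ha : 0 ≤ soundC pfun U) :
    soundC pfun U ≤ waveC pfun hd ξ U := by
  have h := soundC_sq_le hd ξ hξ hρ (pfun := pfun)
  nlinarith [waveC_nonneg hd ξ (pfun := pfun) (U := U)]

lemma waveC_pos (hEOS : IsEOS pfun) (hξ : unitVec ξ) (hU : U ∈ Gset) :
    0 < waveC pfun hd ξ U :=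
  lt_of_lt_of_le (soundC_pos hEOS hU)
    (soundC_le_waveC hd ξ hξ hU.1 (le_of_lt (soundC_pos hEOS hU)))

end WaveFacts

/-! ### The key single-state quadratic bound -/

lemma scalar_core {a cp cx lam s t w q : ℝ} (ha : 0 ≤ a) (hcp : 0 ≤ cp) (hcx : 0 ≤ cx)
    (hs : 0 ≤ s) (ht : 0 ≤ t) (hw : 0 ≤ w) (hq : 0 ≤ q)
    (hlam : 0 < lam) (h1 : a ≤ lam) (h2 : cx ≤ lam)
    (hrel : lam ^ 4 = (a ^ 2 + cp ^ 2 + cx ^ 2) * lam ^ 2 - a ^ 2 * cx ^ 2) :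
    a * s * q + cp * s * w + cx * t * w ≤ lam * (s ^ 2 + t ^ 2 + w ^ 2 + q ^ 2) / 2 := by
  have hXZ : (lam ^ 2 - a ^ 2) * (lam ^ 2 - cx ^ 2) = cp ^ 2 * lam ^ 2 := by
    linear_combination hrel
  have hA2 : 0 ≤ lam ^ 2 - a ^ 2 := by nlinarith
  have hX2 : 0 ≤ lam ^ 2 - cx ^ 2 := by nlinarith
  have hquad : 2 * lam * cp * s * w ≤ (lam ^ 2 - a ^ 2) * s ^ 2 + (lam ^ 2 - cx ^ 2) * w ^ 2 := by
    rcases eq_or_lt_of_le hA2 with h | h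
    · have h0 : cp ^ 2 * lam ^ 2 = 0 := by rw [← hXZ, ← h]; ring
      have hl2 : lam ^ 2 ≠ 0 := by positivity
      have hcp2 : cp ^ 2 = 0 := (mul_eq_zero.mp h0).resolve_right hl2
      have hcp0 : cp = 0 := by nlinarith
      rw [hcp0]
      nlinarith [mul_nonneg hA2 (sq_nonneg s), mul_nonneg hX2 (sq_nonneg w)]
    · have hXZw : (lam ^ 2 - a ^ 2) * (lam ^ 2 - cx ^ 2) * w ^ 2 = cp ^ 2 * lam ^ 2 * w ^ 2 := by
        linear_combination w ^ 2 * hXZ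
      nlinarith [sq_nonneg ((lam ^ 2 - a ^ 2) * s - lam * cp * w), hXZw, h]
  have h3 : 2 * lam * (a * s * q + cp * s * w + cx * t * w)
      ≤ lam ^ 2 * (s ^ 2 + t ^ 2 + w ^ 2 + q ^ 2) := by
    nlinarith [sq_nonneg (lam * q - a * s), sq_nonneg (lam * t - cx * w), hquad]
  nlinarith [h3, hlam]

lemma le_of_sq_le_sq' {x y : ℝ} (hx : 0 ≤ x) (hy : 0 ≤ y) (h : x ^ 2 ≤ y ^ 2) : x ≤ y := by
  nlinarith

lemma perp_sq (ξp : Fin 3 → ℝ) (hξp : sq3 ξp = 1) (w : Fin 3 → ℝ) :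
    sq3 (fun k => w k - dot3 ξp w * ξp k) = sq3 w - (dot3 ξp w) ^ 2 := by
  rw [sq3_expand] at hξp
  simp only [sq3_expand, dot3_expand]
  linear_combination ((ξp 0 * w 0 + ξp 1 * w 1 + ξp 2 * w 2) ^ 2) * hξp

lemma perp_dot (ξp : Fin 3 → ℝ) (hξp : sq3 ξp = 1) (w z : Fin 3 → ℝ) :
    dot3 (fun k => w k - dot3 ξp w * ξp k) (fun k => z k - dot3 ξp z * ξp k)
      = dot3 w z - dot3 ξp w * dot3 ξp z := by
  rw [sq3_expand] at hξp
  simp only [dot3_expand]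
  linear_combination ((ξp 0 * w 0 + ξp 1 * w 1 + ξp 2 * w 2)
    * (ξp 0 * z 0 + ξp 1 * z 1 + ξp 2 * z 2)) * hξp

set_option maxHeartbeats 1000000 in
lemma claim1 (pfun : ℝ → ℝ → ℝ) (hEOS : IsEOS pfun) {d : ℕ} (hd : d ≤ 3)
    (ξ : Fin d → ℝ) (hξ : unitVec ξ) {U : MHDState} (hU : U ∈ Gset) (u b : Fin 3 → ℝ) :
    |pres pfun U * dot3 (pad hd ξ) u + dot3 b (magB U) * dot3 (pad hd ξ) u
        - dot3 u b * dot3 (pad hd ξ) (magB U)|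
      ≤ waveC pfun hd ξ U * (dens U * sq3 u / 2 + sq3 b / 2 + intE U) := by
  have hρ : 0 < dens U := hU.1
  have hsρ : 0 < Real.sqrt (dens U) := Real.sqrt_pos.mpr hρ
  have hP : 0 < pres pfun U := pres_pos hEOS hU
  have ha : 0 < soundC pfun U := soundC_pos hEOS hU
  have hunit : sq3 (pad hd ξ) = 1 := pad_unit hd hξ
  set ξp := pad hd ξ with hxp
  set B := magB U with hB
  set uξ := dot3 ξp u with huξ
  set bξ := dot3 ξp b with hbξ
  set Bξ := dot3 ξp B with hBξ
  set up := fun k => u k - uξ * ξp k with hup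
  set bp := fun k => b k - bξ * ξp k with hbp
  set Bp := fun k => B k - Bξ * ξp k with hBp
  have h1 := perp_dot ξp hunit b B
  have h2 := perp_dot ξp hunit u b
  have hred : pres pfun U * uξ + dot3 b B * uξ - dot3 u b * Bξ
      = pres pfun U * uξ + dot3 bp Bp * uξ - dot3 up bp * Bξ := by
    rw [h1, h2]; ring
  rw [hred]
  -- abs bound
  have habs : |pres pfun U * uξ + dot3 bp Bp * uξ - dot3 up bp * Bξ|
      ≤ pres pfun U * |uξ| + norm3 bp * norm3 Bp * |uξ| + norm3 up * norm3 bp * |Bξ| := by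
    have t1 : |pres pfun U * uξ| = pres pfun U * |uξ| := by
      rw [abs_mul, abs_of_pos hP]
    have t2 : |dot3 bp Bp * uξ| ≤ norm3 bp * norm3 Bp * |uξ| := by
      rw [abs_mul]
      exact mul_le_mul_of_nonneg_right (abs_dot3_le bp Bp) (abs_nonneg _)
    have t3 : |dot3 up bp * Bξ| ≤ norm3 up * norm3 bp * |Bξ| := by
      rw [abs_mul]
      exact mul_le_mul_of_nonneg_right (abs_dot3_le up bp) (abs_nonneg _)
    calc |pres pfun U * uξ + dot3 bp Bp * uξ - dot3 up bp * Bξ|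
        ≤ |pres pfun U * uξ + dot3 bp Bp * uξ| + |dot3 up bp * Bξ| := abs_sub _ _
      _ ≤ |pres pfun U * uξ| + |dot3 bp Bp * uξ| + |dot3 up bp * Bξ| := by
          linarith only [abs_add_le (pres pfun U * uξ) (dot3 bp Bp * uξ)]
      _ ≤ pres pfun U * |uξ| + norm3 bp * norm3 Bp * |uξ| + norm3 up * norm3 bp * |Bξ| := by
          linarith only [t1, t2, t3]
  refine le_trans habs ?_
  -- scalar substitution
  set s := Real.sqrt (dens U) * |uξ| with hs_def
  set t := Real.sqrt (dens U) * norm3 up with ht_def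
  set w := norm3 bp with hw_def
  set q := Real.sqrt (2 * intE U) with hq_def
  set a := soundC pfun U with ha_def
  set cp := norm3 Bp / Real.sqrt (dens U) with hcp_def
  set cx := |Bξ| / Real.sqrt (dens U) with hcx_def
  set lam := waveC pfun hd ξ U with hlam_def
  have hρsq : Real.sqrt (dens U) * Real.sqrt (dens U) = dens U := Real.mul_self_sqrt hρ.le
  -- P|uξ| = a s q
  have hq_eq : q = Real.sqrt (dens U) * Real.sqrt (2 * specE U) := by
    have h2i : 2 * intE U = dens U * (2 * specE U) := by rw [intE_eq hU]; ring
    rw [hq_def, h2i, Real.sqrt_mul hρ.le]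
  have e1 : pres pfun U * |uξ| = a * s * q := by
    rw [pres_eq pfun hU, hq_eq, hs_def, ← ha_def]
    linear_combination (-(a * Real.sqrt (2 * specE U) * |uξ|)) * hρsq
  have e2 : norm3 bp * norm3 Bp * |uξ| = cp * s * w := by
    rw [hcp_def, hs_def, hw_def]
    field_simp
  have e3 : norm3 up * norm3 bp * |Bξ| = cx * t * w := by
    rw [hcx_def, ht_def, hw_def]
    field_simp
  rw [e1, e2, e3]
  -- the φ lower bound
  have hperp_u : sq3 up = sq3 u - uξ ^ 2 := perp_sq ξp hunit u
  have hperp_b : sq3 bp = sq3 b - bξ ^ 2 := perp_sq ξp hunit b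
  have hperp_B : sq3 Bp = sq3 B - Bξ ^ 2 := perp_sq ξp hunit B
  have hphi : (s ^ 2 + t ^ 2 + w ^ 2 + q ^ 2) / 2 ≤ dens U * sq3 u / 2 + sq3 b / 2 + intE U := by
    have hs2 : s ^ 2 = dens U * uξ ^ 2 := by
      rw [hs_def, mul_pow, sq_abs, Real.sq_sqrt hρ.le]
    have ht2 : t ^ 2 = dens U * sq3 up := by
      rw [ht_def, mul_pow, norm3_sq, Real.sq_sqrt hρ.le]
    have hw2 : w ^ 2 = sq3 bp := norm3_sq bp
    have hq2 : q ^ 2 = 2 * intE U := Real.sq_sqrt (by linarith [hU.2])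
    rw [hs2, ht2, hw2, hq2, hperp_u, hperp_b]
    linarith only [sq_nonneg bξ, hU.2]
  -- scalar core hypotheses
  have hBxi_dir : Bξ = dirDot hd ξ B := (dirDot_eq_dot3 hd ξ B).symm
  have hcx2 : cx ^ 2 = dirDot hd ξ B ^ 2 / dens U := by
    rw [hcx_def, div_pow, sq_abs, Real.sq_sqrt hρ.le, hBxi_dir]
  have hcp2 : cp ^ 2 = (sq3 B - Bξ ^ 2) / dens U := by
    rw [hcp_def, div_pow, norm3_sq, hperp_B, Real.sq_sqrt hρ.le]
  have hlam_pos : 0 < lam := waveC_pos hd ξ hEOS hξ hU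
  have h1lam : a ≤ lam := soundC_le_waveC hd ξ hξ hρ ha.le
  have h2lam : cx ≤ lam := by
    have hx := xsq_le_waveC_sq hd ξ hξ hρ (pfun := pfun)
    rw [← hcx2] at hx
    exact le_of_sq_le_sq' (div_nonneg (abs_nonneg _) hsρ.le) hlam_pos.le hx
  have hrel : lam ^ 4 = (a ^ 2 + cp ^ 2 + cx ^ 2) * lam ^ 2 - a ^ 2 * cx ^ 2 := by
    have hr := waveC_rel hd ξ hξ hρ (pfun := pfun)
    rw [hcp2, hcx2, ha_def]
    rw [hr]
    have hBsq : Bξ ^ 2 = dirDot hd ξ B ^ 2 := by rw [hBxi_dir]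
    field_simp
    rw [hBsq]
    ring
  have core := scalar_core (a := a) (cp := cp) (cx := cx) (lam := lam)
    (s := s) (t := t) (w := w) (q := q) ha.le (div_nonneg (norm3_nonneg _) hsρ.le)
    (div_nonneg (abs_nonneg _) hsρ.le) (mul_nonneg hsρ.le (abs_nonneg _))
    (mul_nonneg hsρ.le (norm3_nonneg _)) (norm3_nonneg _) (Real.sqrt_nonneg _)
    hlam_pos h1lam h2lam hrel
  calc a * s * q + cp * s * w + cx * t * w
      ≤ lam * ((s ^ 2 + t ^ 2 + w ^ 2 + q ^ 2) / 2) := by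
        rw [show lam * ((s ^ 2 + t ^ 2 + w ^ 2 + q ^ 2) / 2)
          = lam * (s ^ 2 + t ^ 2 + w ^ 2 + q ^ 2) / 2 by ring]
        exact core
    _ ≤ lam * (dens U * sq3 u / 2 + sq3 b / 2 + intE U) :=
        mul_le_mul_of_nonneg_left hphi hlam_pos.le

/-! ### Helpers for the final assembly -/

lemma aux_lower {x p y m : ℝ} (hx0 : 0 ≤ x) (hxp : x ≤ p) (hm : 0 ≤ m) (hym : -y ≤ m) :
    -(p * m) ≤ x * y := by
  rcases le_or_gt 0 y with h | h
  · have h1 : 0 ≤ x * y := mul_nonneg hx0 h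
    have h2 : 0 ≤ p * m := mul_nonneg (le_trans hx0 hxp) hm
    linarith
  · have hp : 0 ≤ p := le_trans hx0 hxp
    have h1 : p * y ≤ x * y := by nlinarith
    have h2 : -(p * m) ≤ p * y := by nlinarith
    linarith

lemma norm3_add_le (a b : Fin 3 → ℝ) :
    norm3 (fun k => a k + b k) ≤ norm3 a + norm3 b := by
  have h := norm3_comb a b (by norm_num : (0:ℝ) ≤ 1) (by norm_num : (0:ℝ) ≤ 1)
  have he : (fun k => (1:ℝ) * a k + (1:ℝ) * b k) = fun k => a k + b k := by
    funext k; ring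
  rw [he] at h
  simpa using h

lemma dot3_abs_le_norm3 {ξp : Fin 3 → ℝ} (hξp : sq3 ξp = 1) (w : Fin 3 → ℝ) :
    |dot3 ξp w| ≤ norm3 w := by
  have h := abs_dot3_le ξp w
  have h2 : norm3 ξp = 1 := by unfold norm3; rw [hξp]; exact Real.sqrt_one
  rwa [h2, one_mul] at h

lemma cross_bound {X Y sρ sρt nu nut nb nbt nΔ φ φt : ℝ}
    (hsρ : 0 < sρ) (hsρt : 0 < sρt)
    (hnu : 0 ≤ nu) (hnut : 0 ≤ nut) (hnb : 0 ≤ nb) (hnbt : 0 ≤ nbt) (hnΔ : 0 ≤ nΔ)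
    (hX : |X| ≤ (sρ * nu + sρt * nut) / (sρ + sρt)) (hY : |Y| ≤ nΔ * (nb + nbt))
    (hφ : (sρ ^ 2 * nu ^ 2 + nb ^ 2) / 2 ≤ φ) (hφt : (sρt ^ 2 * nut ^ 2 + nbt ^ 2) / 2 ≤ φt) :
    -(nΔ / (sρ + sρt) * φ + nΔ / (sρ + sρt) * φt) ≤ X * Y / 2 := by
  have hS : 0 < sρ + sρt := by linarith
  have hXY : |X * Y| ≤ ((sρ * nu + sρt * nut) / (sρ + sρt)) * (nΔ * (nb + nbt)) := by
    rw [abs_mul]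
    exact mul_le_mul hX hY (abs_nonneg _) (by positivity)
  have k1 : (sρ * nu + sρt * nut) * (nb + nbt) / 2 ≤ φ + φt := by
    nlinarith [sq_nonneg (sρ * nu - nb), sq_nonneg (sρ * nu - nbt),
      sq_nonneg (sρt * nut - nb), sq_nonneg (sρt * nut - nbt)]
  have k2 : (sρ * nu + sρt * nut) * (nΔ * (nb + nbt)) / 2 ≤ nΔ * (φ + φt) := by
    nlinarith [mul_le_mul_of_nonneg_left k1 hnΔ]
  have k3 : |X * Y| / 2 ≤ nΔ * (φ + φt) / (sρ + sρt) := by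
    rw [div_le_div_iff₀ (by norm_num) hS]
    calc |X * Y| * (sρ + sρt)
        ≤ (((sρ * nu + sρt * nut) / (sρ + sρt)) * (nΔ * (nb + nbt))) * (sρ + sρt) := by
          apply mul_le_mul_of_nonneg_right hXY hS.le
      _ = (sρ * nu + sρt * nut) * (nΔ * (nb + nbt)) := by field_simp
      _ ≤ nΔ * (φ + φt) * 2 := by linarith [k2]
  have k4 : -(nΔ * (φ + φt) / (sρ + sρt)) ≤ X * Y / 2 := by
    have := neg_abs_le (X * Y)
    have h5 : -(nΔ * (φ + φt) / (sρ + sρt)) ≤ -(|X * Y| / 2) := by linarith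
    linarith [h5, neg_abs_le (X * Y), show -(|X*Y|/2) ≤ X*Y/2 by linarith [neg_abs_le (X*Y)]]
  calc -(nΔ / (sρ + sρt) * φ + nΔ / (sρ + sρt) * φt)
      = -(nΔ * (φ + φt) / (sρ + sρt)) := by ring
    _ ≤ X * Y / 2 := k4

lemma master' (pfun : ℝ → ℝ → ℝ) {d : ℕ} (hd : d ≤ 3) (ξ : Fin d → ℝ)
    (U : MHDState) (h : dens U ≠ 0) (vs Bs : Fin 3 → ℝ) :
    dot8 (dirFlux pfun hd ξ U) (nstar vs Bs) - dot3 vs Bs * dirDot hd ξ (magB U)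
      = dirDot hd ξ (vel U) * (dot8 U (nstar vs Bs) + sq3 Bs / 2)
        + (pres pfun U * dot3 (pad hd ξ) (fun k => vel U k - vs k)
            + dot3 (fun k => magB U k - Bs k) (magB U)
                * dot3 (pad hd ξ) (fun k => vel U k - vs k)
            - dot3 (fun k => vel U k - vs k) (fun k => magB U k - Bs k)
                * dot3 (pad hd ξ) (magB U))
        - sq3 (fun k => magB U k - Bs k) / 2 * dot3 (pad hd ξ) (fun k => vel U k - vs k)
        - sq3 Bs / 2 * dirDot hd ξ vs := by
  rw [master pfun hd ξ U h vs Bs]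
  rw [dirDot_eq_dot3, dirDot_eq_dot3, dirDot_eq_dot3]
  simp only [dot3_expand, sq3_expand]
  ring

lemma dirFlux_apply0 (pfun : ℝ → ℝ → ℝ) {d : ℕ} (hd : d ≤ 3) (ξ : Fin d → ℝ)
    (U : MHDState) : (dirFlux pfun hd ξ U) 0 = dens U * dirDot hd ξ (vel U) := by
  unfold dirFlux
  simp only [Finset.sum_apply, Pi.smul_apply, smul_eq_mul]
  have h : ∀ i : Fin 3, flux pfun i U 0 = dens U * vel U i := fun _ => rfl
  simp only [h]
  rw [dirDot, Finset.mul_sum]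
  exact Finset.sum_congr rfl fun i _ => by ring

lemma dot8_hll (c a b : ℝ) (A F B G n : MHDState) :
    dot8 (c • (a • A - F - b • B + G)) n
      = c * (a * dot8 A n - dot8 F n - b * dot8 B n + dot8 G n) := by
  simp only [dot8_expand, Pi.smul_apply, Pi.add_apply, Pi.sub_apply, smul_eq_mul]
  ring

lemma dot8_add_smul (A : MHDState) (c : ℝ) (B n : MHDState) :
    dot8 (A + c • B) n = dot8 A n + c * dot8 B n := by
  simp only [dot8_expand, Pi.smul_apply, Pi.add_apply, smul_eq_mul]
  ring

set_option maxHeartbeats 2000000 in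
/-- Corollary 2.4 (two-state HLL estimate). -/
theorem two_state_hll_estimate (pfun : ℝ → ℝ → ℝ) (hEOS : IsEOS pfun)
    {d : ℕ} (hd1 : 1 ≤ d) (hd : d ≤ 3) (ξ : Fin d → ℝ) (hξ : unitVec ξ)
    (U Ut : MHDState) (hU : U ∈ Gset) (hUt : Ut ∈ Gset)
    (α αt : ℝ) (hα : alphaR pfun hd ξ U Ut ≤ α) (hαt : αt ≤ alphaL pfun hd ξ Ut U) :
    αt < α ∧
      ∀ Ubar : MHDState,
        Ubar = (α - αt)⁻¹ •
            (α • U - dirFlux pfun hd ξ U - αt • Ut + dirFlux pfun hd ξ Ut) →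
        Ubar ∈ Grho ∧
          (∀ vs Bs : Fin 3 → ℝ,
            0 ≤ dot8 Ubar (nstar vs Bs) + sq3 Bs / 2
              + dot3 vs Bs * (α - αt)⁻¹ *
                (dirDot hd ξ (magB U) - dirDot hd ξ (magB Ut))) ∧
          (dirDot hd ξ (magB U) = dirDot hd ξ (magB Ut) → Ubar ∈ closure GstarSet) := by
  have hρ : 0 < dens U := hU.1
  have hρt : 0 < dens Ut := hUt.1
  have hsρ : 0 < Real.sqrt (dens U) := Real.sqrt_pos.mpr hρ
  have hsρt : 0 < Real.sqrt (dens Ut) := Real.sqrt_pos.mpr hρt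
  have hC : 0 < waveC pfun hd ξ U := waveC_pos hd ξ hEOS hξ hU
  have hCt : 0 < waveC pfun hd ξ Ut := waveC_pos hd ξ hEOS hξ hUt
  have hδ0 : 0 ≤ norm3 (magB U - magB Ut) / (Real.sqrt (dens U) + Real.sqrt (dens Ut)) :=
    div_nonneg (norm3_nonneg _) (by linarith)
  have hroe_comm : roeV Ut U = roeV U Ut := by
    funext k; unfold roeV
    rw [add_comm (Real.sqrt (dens Ut) * vel Ut k), add_comm (Real.sqrt (dens Ut))]
  unfold alphaR at hα
  unfold alphaL at hαt
  rw [hroe_comm, norm3_sub_symm, add_comm (Real.sqrt (dens Ut))] at hαt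
  have hav : dirDot hd ξ (vel U) + waveC pfun hd ξ U
      + norm3 (magB U - magB Ut) / (Real.sqrt (dens U) + Real.sqrt (dens Ut)) ≤ α := by
    have := le_max_left (dirDot hd ξ (vel U)) (dirDot hd ξ (roeV U Ut)); linarith
  have habar : dirDot hd ξ (roeV U Ut) + waveC pfun hd ξ U
      + norm3 (magB U - magB Ut) / (Real.sqrt (dens U) + Real.sqrt (dens Ut)) ≤ α := by
    have := le_max_right (dirDot hd ξ (vel U)) (dirDot hd ξ (roeV U Ut)); linarith
  have hatv : αt ≤ dirDot hd ξ (vel Ut) - waveC pfun hd ξ Ut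
      - norm3 (magB U - magB Ut) / (Real.sqrt (dens U) + Real.sqrt (dens Ut)) := by
    have := min_le_left (dirDot hd ξ (vel Ut)) (dirDot hd ξ (roeV U Ut)); linarith
  have hatbar : αt ≤ dirDot hd ξ (roeV U Ut) - waveC pfun hd ξ Ut
      - norm3 (magB U - magB Ut) / (Real.sqrt (dens U) + Real.sqrt (dens Ut)) := by
    have := min_le_right (dirDot hd ξ (vel Ut)) (dirDot hd ξ (roeV U Ut)); linarith
  have hlt : αt < α := by linarith
  refine ⟨hlt, ?_⟩
  intro Ubar hUbar
  have hD : 0 < α - αt := by linarith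
  have hDinv : 0 < (α - αt)⁻¹ := inv_pos.mpr hD
  have hdens : 0 < dens Ubar := by
    rw [hUbar]
    unfold dens
    simp only [Pi.smul_apply, Pi.add_apply, Pi.sub_apply, smul_eq_mul]
    rw [dirFlux_apply0, dirFlux_apply0]
    have t1 : 0 < (α - dirDot hd ξ (vel U)) * dens U := mul_pos (by linarith) hρ
    have t2 : 0 < (dirDot hd ξ (vel Ut) - αt) * dens Ut := mul_pos (by linarith) hρt
    have hU0 : U 0 = dens U := rfl
    have hUt0 : Ut 0 = dens Ut := rfl
    rw [hU0, hUt0]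
    apply mul_pos hDinv
    nlinarith [t1, t2]
  have hmain : ∀ vs Bs : Fin 3 → ℝ, 0 ≤ dot8 Ubar (nstar vs Bs) + sq3 Bs / 2
      + dot3 vs Bs * (α - αt)⁻¹ *
        (dirDot hd ξ (magB U) - dirDot hd ξ (magB Ut)) := by
    intro vs Bs
    have hM := master' pfun hd ξ U hρ.ne' vs Bs
    have hMt := master' pfun hd ξ Ut hρt.ne' vs Bs
    have hφU := phi_eq U hρ.ne' vs Bs
    have hφUt := phi_eq Ut hρt.ne' vs Bs
    have hA1 := claim1 pfun hEOS hd ξ hξ hU (fun k => vel U k - vs k)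
      (fun k => magB U k - Bs k)
    have hA2 := claim1 pfun hEOS hd ξ hξ hUt (fun k => vel Ut k - vs k)
      (fun k => magB Ut k - Bs k)
    rw [← hφU] at hA1
    rw [← hφUt] at hA2
    obtain ⟨hA1l, hA1r⟩ := abs_le.mp hA1
    obtain ⟨hA2l, hA2r⟩ := abs_le.mp hA2
    have hsq3u := sq3_nonneg (fun k => vel U k - vs k)
    have hsq3b := sq3_nonneg (fun k => magB U k - Bs k)
    have hsq3ut := sq3_nonneg (fun k => vel Ut k - vs k)
    have hsq3bt := sq3_nonneg (fun k => magB Ut k - Bs k)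
    have hbφ : sq3 (fun k => magB U k - Bs k) / 2 ≤ dot8 U (nstar vs Bs) + sq3 Bs / 2 := by
      rw [hφU]; nlinarith [mul_nonneg hρ.le hsq3u, hU.2]
    have hbφt : sq3 (fun k => magB Ut k - Bs k) / 2
        ≤ dot8 Ut (nstar vs Bs) + sq3 Bs / 2 := by
      rw [hφUt]; nlinarith [mul_nonneg hρt.le hsq3ut, hUt.2]
    have hEu : dot3 (pad hd ξ) (fun k => vel U k - vs k)
        = dot3 (pad hd ξ) (vel U) - dot3 (pad hd ξ) vs := by
      simp only [dot3_expand]; ring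
    have hEut : dot3 (pad hd ξ) (fun k => vel Ut k - vs k)
        = dot3 (pad hd ξ) (vel Ut) - dot3 (pad hd ξ) vs := by
      simp only [dot3_expand]; ring
    have hEr : dot3 (pad hd ξ) (fun k => roeV U Ut k - vs k)
        = dot3 (pad hd ξ) (roeV U Ut) - dot3 (pad hd ξ) vs := by
      simp only [dot3_expand]; ring
    simp only [dirDot_eq_dot3 hd ξ] at hM hMt hav habar hatv hatbar ⊢
    -- aux_lower bounds
    have B3 : -((dot8 U (nstar vs Bs) + sq3 Bs / 2)
          * (α - waveC pfun hd ξ U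
              - norm3 (magB U - magB Ut) / (Real.sqrt (dens U) + Real.sqrt (dens Ut))
              - dot3 (pad hd ξ) (vel U)))
        ≤ sq3 (fun k => magB U k - Bs k) / 2
          * (dot3 (pad hd ξ) (vel U) - dot3 (pad hd ξ) (roeV U Ut)) := by
      apply aux_lower (by linarith [hsq3b]) hbφ (by linarith [hav]) (by linarith [habar])
    have B4 : -((dot8 Ut (nstar vs Bs) + sq3 Bs / 2)
          * (dot3 (pad hd ξ) (vel Ut) - αt - waveC pfun hd ξ Ut
              - norm3 (magB U - magB Ut) / (Real.sqrt (dens U) + Real.sqrt (dens Ut))))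
        ≤ sq3 (fun k => magB Ut k - Bs k) / 2
          * (dot3 (pad hd ξ) (roeV U Ut) - dot3 (pad hd ξ) (vel Ut)) := by
      apply aux_lower (by linarith [hsq3bt]) hbφt (by linarith [hatv]) (by linarith [hatbar])
    have E1 : sq3 (fun k => magB U k - Bs k) / 2
          * dot3 (pad hd ξ) (fun k => vel U k - vs k)
        = sq3 (fun k => magB U k - Bs k) / 2
            * (dot3 (pad hd ξ) (vel U) - dot3 (pad hd ξ) (roeV U Ut))
          + sq3 (fun k => magB U k - Bs k) / 2
            * (dot3 (pad hd ξ) (roeV U Ut) - dot3 (pad hd ξ) vs) := by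
      linear_combination (sq3 (fun k => magB U k - Bs k) / 2) * hEu
    have E2 : sq3 (fun k => magB Ut k - Bs k) / 2
          * dot3 (pad hd ξ) (fun k => vel Ut k - vs k)
        = sq3 (fun k => magB Ut k - Bs k) / 2
            * (dot3 (pad hd ξ) (vel Ut) - dot3 (pad hd ξ) (roeV U Ut))
          + sq3 (fun k => magB Ut k - Bs k) / 2
            * (dot3 (pad hd ξ) (roeV U Ut) - dot3 (pad hd ξ) vs) := by
      linear_combination (sq3 (fun k => magB Ut k - Bs k) / 2) * hEut
    have E3 : sq3 (fun k => magB U k - Bs k) / 2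
            * (dot3 (pad hd ξ) (roeV U Ut) - dot3 (pad hd ξ) vs)
          - sq3 (fun k => magB Ut k - Bs k) / 2
            * (dot3 (pad hd ξ) (roeV U Ut) - dot3 (pad hd ξ) vs)
        = dot3 (pad hd ξ) (fun k => roeV U Ut k - vs k)
          * (sq3 (fun k => magB U k - Bs k) - sq3 (fun k => magB Ut k - Bs k)) / 2 := by
      linear_combination (-(sq3 (fun k => magB U k - Bs k)
        - sq3 (fun k => magB Ut k - Bs k)) / 2) * hEr
    -- cross bound
    have hroe_decomp : (fun k => roeV U Ut k - vs k)
        = (fun k => (Real.sqrt (dens U) / (Real.sqrt (dens U) + Real.sqrt (dens Ut)))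
              * (vel U k - vs k)
            + (Real.sqrt (dens Ut) / (Real.sqrt (dens U) + Real.sqrt (dens Ut)))
              * (vel Ut k - vs k)) := by
      funext k; unfold roeV; field_simp; ring
    have hXbound : |dot3 (pad hd ξ) (fun k => roeV U Ut k - vs k)|
        ≤ (Real.sqrt (dens U) * norm3 (fun k => vel U k - vs k)
            + Real.sqrt (dens Ut) * norm3 (fun k => vel Ut k - vs k))
          / (Real.sqrt (dens U) + Real.sqrt (dens Ut)) := by
      refine le_trans (dot3_abs_le_norm3 (pad_unit hd hξ) _) ?_
      rw [hroe_decomp]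
      refine le_trans (norm3_comb _ _ (by positivity) (by positivity)) ?_
      rw [div_mul_eq_mul_div, div_mul_eq_mul_div, ← add_div]
    have hYbound : |sq3 (fun k => magB U k - Bs k) - sq3 (fun k => magB Ut k - Bs k)|
        ≤ norm3 (magB U - magB Ut)
          * (norm3 (fun k => magB U k - Bs k) + norm3 (fun k => magB Ut k - Bs k)) := by
      have hdiff : sq3 (fun k => magB U k - Bs k) - sq3 (fun k => magB Ut k - Bs k)
          = dot3 (fun k => magB U k - magB Ut k)
              (fun k => (magB U k - Bs k) + (magB Ut k - Bs k)) := by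
        simp only [sq3_expand, dot3_expand]; ring
      rw [hdiff]
      refine le_trans (abs_dot3_le _ _) ?_
      have hsub : norm3 (fun k => magB U k - magB Ut k) = norm3 (magB U - magB Ut) := by
        congr 1
      rw [hsub]
      exact mul_le_mul_of_nonneg_left
        (norm3_add_le (fun k => magB U k - Bs k) (fun k => magB Ut k - Bs k))
        (norm3_nonneg _)
    have hφlow : (Real.sqrt (dens U) ^ 2 * norm3 (fun k => vel U k - vs k) ^ 2
          + norm3 (fun k => magB U k - Bs k) ^ 2) / 2
        ≤ dot8 U (nstar vs Bs) + sq3 Bs / 2 := by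
      rw [Real.sq_sqrt hρ.le, norm3_sq, norm3_sq, hφU]; linarith [hU.2]
    have hφlowt : (Real.sqrt (dens Ut) ^ 2 * norm3 (fun k => vel Ut k - vs k) ^ 2
          + norm3 (fun k => magB Ut k - Bs k) ^ 2) / 2
        ≤ dot8 Ut (nstar vs Bs) + sq3 Bs / 2 := by
      rw [Real.sq_sqrt hρt.le, norm3_sq, norm3_sq, hφUt]; linarith [hUt.2]
    have B5 := cross_bound hsρ hsρt (norm3_nonneg (fun k => vel U k - vs k))
      (norm3_nonneg (fun k => vel Ut k - vs k)) (norm3_nonneg (fun k => magB U k - Bs k))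
      (norm3_nonneg (fun k => magB Ut k - Bs k)) (norm3_nonneg (magB U - magB Ut))
      hXbound hYbound hφlow hφlowt
    -- final goal transformation
    rw [hUbar, dot8_hll]
    have hKrw : (α - αt)⁻¹ * (α * dot8 U (nstar vs Bs)
            - dot8 (dirFlux pfun hd ξ U) (nstar vs Bs)
            - αt * dot8 Ut (nstar vs Bs) + dot8 (dirFlux pfun hd ξ Ut) (nstar vs Bs))
          + sq3 Bs / 2 + dot3 vs Bs * (α - αt)⁻¹
            * (dot3 (pad hd ξ) (magB U) - dot3 (pad hd ξ) (magB Ut))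
        = (α - αt)⁻¹ * (α * (dot8 U (nstar vs Bs) + sq3 Bs / 2)
            - (dot8 (dirFlux pfun hd ξ U) (nstar vs Bs)
                - dot3 vs Bs * dot3 (pad hd ξ) (magB U))
            - αt * (dot8 Ut (nstar vs Bs) + sq3 Bs / 2)
            + (dot8 (dirFlux pfun hd ξ Ut) (nstar vs Bs)
                - dot3 vs Bs * dot3 (pad hd ξ) (magB Ut))) := by
      field_simp
      ring
    rw [hKrw]
    apply mul_nonneg hDinv.le
    rw [hM, hMt]
    linarith only [hA1r, hA2l, B3, B4, B5, E1, E2, E3]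
  refine ⟨hdens, hmain, ?_⟩
  intro hBeq
  have hz : ∀ vs Bs : Fin 3 → ℝ, 0 ≤ dot8 Ubar (nstar vs Bs) + sq3 Bs / 2 := by
    intro vs Bs
    have h := hmain vs Bs
    rw [hBeq, sub_self, mul_zero] at h
    linarith
  set e7 : MHDState := (![0, 0, 0, 0, 0, 0, 0, 1] : Fin 8 → ℝ) with he7
  have hmem : ∀ c : ℝ, 0 < c → Ubar + c • e7 ∈ GstarSet := by
    intro c hc
    constructor
    · have hd0 : dens (Ubar + c • e7) = dens Ubar := by
        unfold dens
        simp only [Pi.add_apply, Pi.smul_apply, smul_eq_mul, he7]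
        norm_num [show ((![0, 0, 0, 0, 0, 0, 0, 1] : Fin 8 → ℝ) 0) = 0 from rfl]
      rw [hd0]; exact hdens
    · intro vs Bs
      rw [dot8_add_smul]
      have he : dot8 e7 (nstar vs Bs) = 1 := by
        rw [dot8_expand]
        have h0 : e7 0 = 0 := rfl
        have h1 : e7 1 = 0 := rfl
        have h2 : e7 2 = 0 := rfl
        have h3 : e7 3 = 0 := rfl
        have h4 : e7 4 = 0 := rfl
        have h5 : e7 5 = 0 := rfl
        have h6 : e7 6 = 0 := rfl
        have h7 : e7 7 = 1 := rfl
        have h8 : nstar vs Bs 7 = 1 := rfl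
        rw [h0, h1, h2, h3, h4, h5, h6, h7, h8]
        ring
      rw [he]
      have := hz vs Bs
      linarith
  have htend : Filter.Tendsto (fun n : ℕ => Ubar + ((1:ℝ) / (n + 1)) • e7)
      Filter.atTop (nhds Ubar) := by
    have h0 : Filter.Tendsto (fun n : ℕ => (1:ℝ) / (n + 1)) Filter.atTop (nhds 0) :=
      tendsto_one_div_add_atTop_nhds_zero_nat
    have h1 := h0.smul_const e7
    rw [zero_smul] at h1
    have h2 := (tendsto_const_nhds (x := Ubar) (f := Filter.atTop (α := ℕ))).add h1
    rw [add_zero] at h2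
    exact h2
  exact mem_closure_of_tendsto htend
    (Filter.Eventually.of_forall fun n => hmem _ (by positivity))
end MHD
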